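/- arXiv:1612.08651 — 8 statements merged into one kernel-verified Lean document; each statement's English description precedes it below -/
import Mathlib

section
/- Let p, q, r be pairwise distinct complex numbers and k a natural number. Then there exist complex numbers a, b, c, d, not all zero, such that a·(X−p)^{k+2}(X−q)^{k+1}(X−r)^k + b·(X−p)^{k+2}(X−r)^{k+1}(X−q)^k + c·(X−q)^{k+2}(X−p)^{k+1}(X−r)^k + d·(X−r)^{k+2}(X−p)^{k+1}(X−q)^k = 0 in ℂ[X]. Moreover, the four polynomials appearing are pairwise non-proportional. -/
open Polynomial

/-- Two polynomials are non-proportional: neither is a scalar multiple of the other. -/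
def NonProp (f g : Polynomial ℂ) : Prop := ∀ e : ℂ, f ≠ C e * g ∧ g ≠ C e * f

private lemma pow_ne (a : ℂ) (n : ℕ) : (X - C a) ^ n ≠ (0 : ℂ[X]) :=
  pow_ne_zero _ (X_sub_C_ne_zero a)

private lemma rm_pow_ne (x a : ℂ) (h : x ≠ a) (n : ℕ) :
    rootMultiplicity x ((X - C a) ^ n) = 0 := by
  apply rootMultiplicity_eq_zero
  simp [IsRoot, sub_ne_zero.mpr h]

private lemma rm3 (a b c x : ℂ) (i j l : ℕ) :
    rootMultiplicity x ((X - C a) ^ i * (X - C b) ^ j * (X - C c) ^ l) =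
      rootMultiplicity x ((X - C a) ^ i) + rootMultiplicity x ((X - C b) ^ j) +
        rootMultiplicity x ((X - C c) ^ l) := by
  rw [rootMultiplicity_mul (mul_ne_zero (mul_ne_zero (pow_ne a i) (pow_ne b j)) (pow_ne c l)),
    rootMultiplicity_mul (mul_ne_zero (pow_ne a i) (pow_ne b j))]

private lemma nonprop_of_rm {f g : ℂ[X]} (hf : f ≠ 0) (hg : g ≠ 0) (x : ℂ)
    (h : rootMultiplicity x f ≠ rootMultiplicity x g) : NonProp f g := by
  have key : ∀ f g : ℂ[X], f ≠ 0 → rootMultiplicity x f ≠ rootMultiplicity x g →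
      ∀ e : ℂ, f ≠ C e * g := by
    intro f g hf h e he
    rcases eq_or_ne e 0 with rfl | he0
    · simp at he; exact hf he
    · apply h
      rw [he, rootMultiplicity_mul (by rw [← he]; exact hf), rootMultiplicity_C]
      simp
  exact fun e => ⟨key f g hf h e, key g f hg (Ne.symm h) e⟩

theorem stmt_2 (p q r : ℂ) (hpq : p ≠ q) (hpr : p ≠ r) (hqr : q ≠ r) (k : ℕ) :
    (∃ a b c d : ℂ, ¬(a = 0 ∧ b = 0 ∧ c = 0 ∧ d = 0) ∧
      C a * ((X - C p) ^ (k + 2) * (X - C q) ^ (k + 1) * (X - C r) ^ k) +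
      C b * ((X - C p) ^ (k + 2) * (X - C r) ^ (k + 1) * (X - C q) ^ k) +
      C c * ((X - C q) ^ (k + 2) * (X - C p) ^ (k + 1) * (X - C r) ^ k) +
      C d * ((X - C r) ^ (k + 2) * (X - C p) ^ (k + 1) * (X - C q) ^ k) = 0) ∧
    Pairwise fun i j : Fin 4 =>
      NonProp
        ((![(X - C p) ^ (k + 2) * (X - C q) ^ (k + 1) * (X - C r) ^ k,
            (X - C p) ^ (k + 2) * (X - C r) ^ (k + 1) * (X - C q) ^ k,
            (X - C q) ^ (k + 2) * (X - C p) ^ (k + 1) * (X - C r) ^ k,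
            (X - C r) ^ (k + 2) * (X - C p) ^ (k + 1) * (X - C q) ^ k]) i)
        ((![(X - C p) ^ (k + 2) * (X - C q) ^ (k + 1) * (X - C r) ^ k,
            (X - C p) ^ (k + 2) * (X - C r) ^ (k + 1) * (X - C q) ^ k,
            (X - C q) ^ (k + 2) * (X - C p) ^ (k + 1) * (X - C r) ^ k,
            (X - C r) ^ (k + 2) * (X - C p) ^ (k + 1) * (X - C q) ^ k]) j) := by
  constructor
  · refine ⟨-(q - r) * (p - r), -(q - r) * (p - q), (p - r) ^ 2, -(p - q) ^ 2, ?_, ?_⟩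
    · rintro ⟨-, -, hc, -⟩
      exact sub_ne_zero.mpr hpr (pow_eq_zero_iff (n := 2) (by norm_num) |>.mp hc)
    · simp only [map_neg, map_mul, map_sub, map_pow]
      ring
  · have hne : ∀ a b c : ℂ, ∀ i j l : ℕ,
        (X - C a) ^ i * (X - C b) ^ j * (X - C c) ^ l ≠ 0 := fun a b c i j l =>
      mul_ne_zero (mul_ne_zero (pow_ne a i) (pow_ne b j)) (pow_ne c l)
    have rm_if : ∀ x a : ℂ, ∀ n : ℕ,
        rootMultiplicity x ((X - C a) ^ n) = if x = a then n else 0 := by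
      intro x a n
      split
      · next h => subst h; exact rootMultiplicity_X_sub_C_pow x n
      · next h => exact rm_pow_ne x a h n
    intro i j hij
    fin_cases i <;> fin_cases j <;> simp only [Fin.mk_zero, Fin.mk_one, ne_eq, Fin.reduceFinMk, Nat.reduceAdd,
      Matrix.cons_val', Matrix.cons_val_zero, Matrix.cons_val_one, Matrix.head_cons,
      Matrix.cons_val_fin_one, Fin.isValue, Matrix.cons_val_two, Matrix.tail_cons,
      Matrix.cons_val_three] <;>
    first
      | exact absurd rfl hij
      | (refine nonprop_of_rm (hne _ _ _ _ _ _) (hne _ _ _ _ _ _) p ?_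
         simp [rm3, rm_if, hpq, hpr, hpq.symm, hpr.symm] <;> omega)
      | (refine nonprop_of_rm (hne _ _ _ _ _ _) (hne _ _ _ _ _ _) q ?_
         simp [rm3, rm_if, hpq, hqr, hpq.symm, hqr.symm] <;> omega)
      | (refine nonprop_of_rm (hne _ _ _ _ _ _) (hne _ _ _ _ _ _) r ?_
         simp [rm3, rm_if, hpr, hqr, hpr.symm, hqr.symm] <;> omega)
end

section
/- Let m ≥ 1 and let a₁, …, a_{m+2} be pairwise distinct complex numbers. Let g ∈ ℂ[X] be a nonzero polynomial with g(aᵢ) ≠ 0 for all i. Then the m+2 polynomials g(X)·(X−a₁)^m, …, g(X)·(X−a_{m+2})^m are linearly dependent over ℂ, and they are pairwise non-proportional. -/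
open Polynomial

lemma aux_nonprop (m : ℕ) (hm : 1 ≤ m) (g : Polynomial ℂ) (hg : g ≠ 0)
    (x y : ℂ) (hxy : x ≠ y) (e : ℂ) :
    g * (X - C x) ^ m ≠ C e * (g * (X - C y) ^ m) := by
  intro h
  rw [mul_left_comm] at h
  have h2 : (X - C x) ^ m = C e * (X - C y) ^ m := mul_left_cancel₀ hg h
  have := congrArg (Polynomial.eval y) h2
  simp [sub_eq_zero, zero_pow (by omega : m ≠ 0)] at this
  exact hxy this.1.symm

theorem stmt_5 (m : ℕ) (hm : 1 ≤ m) (a : Fin (m + 2) → ℂ) (ha : Function.Injective a)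
    (g : Polynomial ℂ) (hg : g ≠ 0) (hga : ∀ i, g.eval (a i) ≠ 0) :
    ¬ LinearIndependent ℂ (fun i : Fin (m + 2) => g * (X - C (a i)) ^ m) ∧
    Pairwise fun i j : Fin (m + 2) =>
      NonProp (g * (X - C (a i)) ^ m) (g * (X - C (a j)) ^ m) := by
  constructor
  · intro hli
    -- cancel g via the injective linear map of multiplication by g
    have hmul : LinearIndependent ℂ (fun i : Fin (m + 2) => (X - C (a i)) ^ m) := by
      have hinj : Function.Injective (LinearMap.mulLeft ℂ g) := by
        intro p q hpq
        simpa using mul_left_cancel₀ hg (by simpa using hpq)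
      refine LinearIndependent.of_comp (LinearMap.mulLeft ℂ g) ?_
      simpa [Function.comp_def] using hli
    -- the polynomials live in degreeLT ℂ (m+1)
    have hmem : ∀ i : Fin (m + 2), (X - C (a i)) ^ m ∈ degreeLT ℂ (m + 1) := by
      intro i
      rw [mem_degreeLT]
      rw [degree_pow, degree_X_sub_C]
      exact_mod_cast lt_of_le_of_lt (by simp) (Nat.cast_lt.mpr (Nat.lt_succ_self m))
    have hli' : LinearIndependent ℂ
        (fun i : Fin (m + 2) => (⟨(X - C (a i)) ^ m, hmem i⟩ : degreeLT ℂ (m + 1))) := by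
      refine LinearIndependent.of_comp (Submodule.subtype _) ?_
      simpa [Function.comp_def] using hmul
    haveI : Module.Finite ℂ (degreeLT ℂ (m + 1)) :=
      Module.Finite.equiv (degreeLTEquiv ℂ (m + 1)).symm
    have hcard := hli'.fintype_card_le_finrank
    have hfr : Module.finrank ℂ (degreeLT ℂ (m + 1)) = m + 1 := by
      rw [(degreeLTEquiv ℂ (m + 1)).finrank_eq]
      simp
    rw [hfr, Fintype.card_fin] at hcard
    omega
  · intro i j hij e
    exact ⟨aux_nonprop m hm g hg _ _ (fun h => hij (ha h)) e,
      aux_nonprop m hm g hg _ _ (fun h => hij (ha h.symm)) e⟩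
end

section
/- Let t ≥ 1 be a natural number and p, q, r pairwise distinct complex numbers. Then (q−r)·(X−p)^{t+1}(X−q)^t(X−r)^t + (r−p)·(X−q)^{t+1}(X−p)^t(X−r)^t + (p−q)·(X−r)^{t+1}(X−p)^t(X−q)^t = 0 in ℂ[X], and the three polynomials appearing are pairwise non-proportional with all coefficients (q−r), (r−p), (p−q) nonzero. -/
open Polynomial

lemma key_aux (a b c : ℂ) (t : ℕ)
    (h : (X - C a) ^ (t + 1) * (X - C b) ^ t * (X - C c) ^ t =
      (X - C b) ^ (t + 1) * (X - C a) ^ t * (X - C c) ^ t) : a = b := by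
  have h1 := mul_right_cancel₀ (pow_ne_zero t (X_sub_C_ne_zero c)) h
  have h2 : ((X - C a) ^ t * (X - C b) ^ t) * (X - C a) =
      ((X - C a) ^ t * (X - C b) ^ t) * (X - C b) := by
    rw [pow_succ] at h1; ring_nf at h1 ⊢; linear_combination h1
  have h3 : (X - C a : Polynomial ℂ) = X - C b :=
    mul_left_cancel₀ (mul_ne_zero (pow_ne_zero t (X_sub_C_ne_zero a))
      (pow_ne_zero t (X_sub_C_ne_zero b))) h2
  have := congrArg (eval 0) h3
  simpa using this

lemma nonprop_aux (f g : Polynomial ℂ) (hf : f.Monic) (hg : g.Monic) (hne : f ≠ g) :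
    NonProp f g := by
  intro e
  constructor
  · intro h
    have he : e = 1 := by
      have := congrArg leadingCoeff h
      rw [hf.leadingCoeff] at this
      rcases eq_or_ne e 0 with h0 | h0
      · simp [h0] at this
      · rw [leadingCoeff_mul, leadingCoeff_C, hg.leadingCoeff, mul_one] at this
        exact this.symm
    rw [he, map_one, one_mul] at h
    exact hne h
  · intro h
    have he : e = 1 := by
      have := congrArg leadingCoeff h
      rw [hg.leadingCoeff] at this
      rcases eq_or_ne e 0 with h0 | h0
      · simp [h0] at this
      · rw [leadingCoeff_mul, leadingCoeff_C, hf.leadingCoeff, mul_one] at this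
        exact this.symm
    rw [he, map_one, one_mul] at h
    exact hne h.symm

theorem stmt_6 (t : ℕ) (ht : 1 ≤ t) (p q r : ℂ) (hpq : p ≠ q) (hpr : p ≠ r) (hqr : q ≠ r) :
    C (q - r) * ((X - C p) ^ (t + 1) * (X - C q) ^ t * (X - C r) ^ t) +
      C (r - p) * ((X - C q) ^ (t + 1) * (X - C p) ^ t * (X - C r) ^ t) +
      C (p - q) * ((X - C r) ^ (t + 1) * (X - C p) ^ t * (X - C q) ^ t) = 0 ∧
    q - r ≠ 0 ∧ r - p ≠ 0 ∧ p - q ≠ 0 ∧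
    NonProp ((X - C p) ^ (t + 1) * (X - C q) ^ t * (X - C r) ^ t)
      ((X - C q) ^ (t + 1) * (X - C p) ^ t * (X - C r) ^ t) ∧
    NonProp ((X - C p) ^ (t + 1) * (X - C q) ^ t * (X - C r) ^ t)
      ((X - C r) ^ (t + 1) * (X - C p) ^ t * (X - C q) ^ t) ∧
    NonProp ((X - C q) ^ (t + 1) * (X - C p) ^ t * (X - C r) ^ t)
      ((X - C r) ^ (t + 1) * (X - C p) ^ t * (X - C q) ^ t) := by
  have mon : ∀ a b c : ℂ, ((X - C a) ^ (t + 1) * (X - C b) ^ t * (X - C c) ^ t).Monic :=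
    fun a b c => ((monic_X_sub_C a).pow _ |>.mul ((monic_X_sub_C b).pow _)).mul
      ((monic_X_sub_C c).pow _)
  refine ⟨?_, sub_ne_zero.mpr hqr, sub_ne_zero.mpr hpr.symm, sub_ne_zero.mpr hpq, ?_, ?_, ?_⟩
  · have : (C (q - r) * (X - C p) + C (r - p) * (X - C q) + C (p - q) * (X - C r) :
        Polynomial ℂ) = 0 := by
      simp only [map_sub]; ring
    calc C (q - r) * ((X - C p) ^ (t + 1) * (X - C q) ^ t * (X - C r) ^ t) +
          C (r - p) * ((X - C q) ^ (t + 1) * (X - C p) ^ t * (X - C r) ^ t) +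
          C (p - q) * ((X - C r) ^ (t + 1) * (X - C p) ^ t * (X - C q) ^ t)
        = (C (q - r) * (X - C p) + C (r - p) * (X - C q) + C (p - q) * (X - C r)) *
            ((X - C p) ^ t * (X - C q) ^ t * (X - C r) ^ t) := by ring
      _ = 0 := by rw [this, zero_mul]
  · exact nonprop_aux _ _ (mon p q r) (mon q p r)
      (fun h => hpq (key_aux p q r t (by linear_combination h)))
  · exact nonprop_aux _ _ (mon p q r) (mon r p q)
      (fun h => hpr (key_aux p r q t (by linear_combination h)))
  · exact nonprop_aux _ _ (mon q p r) (mon r p q)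
      (fun h => hqr (key_aux q r p t (by linear_combination h)))
end

section
/- Let t ≥ 1 and i ≥ 1 be natural numbers, and let p₀, p₁, …, p_{i+1} be pairwise distinct complex numbers. For each k ∈ {0, …, i+1} define f_k(X) = (X−p_k)^i · ∏_{j=0}^{i+1} (X−p_j)^t. Then the i+2 polynomials f₀, …, f_{i+1} are linearly dependent over ℂ, and they are pairwise non-proportional. -/
open Polynomial

theorem stmt_7 (t i : ℕ) (ht : 1 ≤ t) (hi : 1 ≤ i) (p : Fin (i + 2) → ℂ)
    (hp : Function.Injective p) :
    ¬ LinearIndependent ℂ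
        (fun k : Fin (i + 2) => (X - C (p k)) ^ i * ∏ j, (X - C (p j)) ^ t) ∧
    Pairwise fun k l : Fin (i + 2) =>
      NonProp ((X - C (p k)) ^ i * ∏ j, (X - C (p j)) ^ t)
        ((X - C (p l)) ^ i * ∏ j, (X - C (p j)) ^ t) := by
  set Q : Polynomial ℂ := ∏ j, (X - C (p j)) ^ t with hQdef
  have hQ : Q ≠ 0 := by
    apply Finset.prod_ne_zero_iff.2
    intro j _
    exact pow_ne_zero _ (X_sub_C_ne_zero _)
  constructor
  · intro h
    -- cancel the common factor Q
    have h2 : LinearIndependent ℂ (fun k : Fin (i+2) => (X - C (p k)) ^ i) := by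
      have := h.of_comp (LinearMap.mulRight ℂ Q)
      exact this
    -- restrict to degreeLT
    have hmem : ∀ k : Fin (i+2), ((X - C (p k)) ^ i) ∈ Polynomial.degreeLT ℂ (i+1) := by
      intro k
      rw [Polynomial.mem_degreeLT]
      have hd : ((X - C (p k)) ^ i).degree = (i : WithBot ℕ) := by
        rw [Polynomial.degree_pow, Polynomial.degree_X_sub_C]
        simp
      rw [hd]
      exact_mod_cast Nat.lt_succ_self i
    set w : Fin (i+2) → Polynomial.degreeLT ℂ (i+1) := fun k => ⟨_, hmem k⟩ with hw
    have h3 : LinearIndependent ℂ w := by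
      apply LinearIndependent.of_comp (Polynomial.degreeLT ℂ (i+1)).subtype
      exact h2
    haveI : Module.Finite ℂ (Polynomial.degreeLT ℂ (i+1)) :=
      Module.Finite.equiv (Polynomial.degreeLTEquiv ℂ (i+1)).symm
    have hcard := h3.fintype_card_le_finrank
    have hfr : Module.finrank ℂ (Polynomial.degreeLT ℂ (i+1)) = i + 1 := by
      rw [LinearEquiv.finrank_eq (Polynomial.degreeLTEquiv ℂ (i+1))]
      simp
    rw [hfr, Fintype.card_fin] at hcard
    omega
  · intro k l hkl
    intro e
    have hne : p k ≠ p l := fun h => hkl (hp h)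
    have key : ∀ a b : ℂ, a ≠ b →
        (X - C a) ^ i * Q ≠ C e * ((X - C b) ^ i * Q) := by
      intro a b hab hcontra
      have h1 : (X - C a) ^ i * Q = (C e * (X - C b) ^ i) * Q := by
        rw [hcontra]; ring
      have h2 : (X - C a) ^ i = C e * (X - C b) ^ i := mul_right_cancel₀ hQ h1
      have h3 : (0:ℂ) = e * (a - b) ^ i := by
        have := congrArg (Polynomial.eval a) h2
        simpa [sub_self, zero_pow (by omega : i ≠ 0)] using this
      have he : e = 0 := by
        rcases mul_eq_zero.mp h3.symm with h | h
        · exact h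
        · exact absurd h (pow_ne_zero i (sub_ne_zero.mpr hab))
      rw [he] at h2
      simp at h2
      exact X_sub_C_ne_zero a h2.1
    exact ⟨key _ _ hne, key _ _ hne.symm⟩
end

section
/- Let f₁, …, fₙ ∈ ℂ[X], let α ∈ ℂ, and let m₁, …, mₙ be natural numbers with mᵢ ≥ n−1 for all i, such that (X−α)^{mᵢ} divides fᵢ for each i. Then (X−α)^{m₁+⋯+mₙ−n(n−1)} divides the Wronskian W(f₁, …, fₙ). -/
open Polynomial

/-- The Wronskian of an `n`-tuple of polynomials: determinant of the matrix whose
`(j,k)` entry is the `j`-th derivative of the `k`-th polynomial. -/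
noncomputable def Wronskian {n : ℕ} (f : Fin n → Polynomial ℂ) : Polynomial ℂ :=
  (Matrix.of fun j k : Fin n => Polynomial.derivative^[(j : ℕ)] (f k)).det

lemma deriv_dvd (α : ℂ) (m : ℕ) (f : Polynomial ℂ) (h : (X - C α) ^ m ∣ f) :
    (X - C α) ^ (m - 1) ∣ derivative f := by
  rcases m with _ | m
  · simp
  obtain ⟨g, rfl⟩ := h
  rw [derivative_mul, derivative_pow]
  simp only [Nat.succ_sub_one]
  apply dvd_add
  · exact ((dvd_mul_left _ _).mul_right _).mul_right _
  · exact Dvd.dvd.mul_right (pow_dvd_pow _ (Nat.le_succ m)) _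

lemma iter_deriv_dvd (α : ℂ) (j m : ℕ) (f : Polynomial ℂ) (h : (X - C α) ^ m ∣ f) :
    (X - C α) ^ (m - j) ∣ derivative^[j] f := by
  induction j generalizing m f with
  | zero => simpa using h
  | succ j ih =>
    rw [Function.iterate_succ_apply]
    have := ih (m - 1) (derivative f) (deriv_dvd α m f h)
    rwa [Nat.sub_sub, Nat.add_comm] at this

theorem stmt_9 (n : ℕ) (f : Fin n → Polynomial ℂ) (α : ℂ) (m : Fin n → ℕ)
    (hm : ∀ i, n - 1 ≤ m i) (hdvd : ∀ i, (X - C α) ^ (m i) ∣ f i) :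
    (X - C α) ^ ((∑ i, m i) - n * (n - 1)) ∣ Wronskian f := by
  have hsum : (∑ i, m i) - n * (n - 1) = ∑ i : Fin n, (m i - (n - 1)) := by
    rw [Finset.sum_tsub_distrib _ (fun i _ => hm i)]
    simp [Finset.sum_const, mul_comm]
  rw [hsum, Wronskian, Matrix.det_apply]
  apply Finset.dvd_sum
  intro σ _
  have : ∏ i : Fin n, (X - C α) ^ (m i - (n - 1)) ∣
      ∏ i : Fin n, (Matrix.of fun j k : Fin n => derivative^[(j : ℕ)] (f k)) (σ i) i := by
    apply Finset.prod_dvd_prod_of_dvd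
    intro i _
    simp only [Matrix.of_apply]
    calc (X - C α) ^ (m i - (n - 1)) ∣ (X - C α) ^ (m i - (σ i : ℕ)) :=
          pow_dvd_pow _ (Nat.sub_le_sub_left (Nat.le_sub_one_of_lt (σ i).isLt) _)
      _ ∣ derivative^[(σ i : ℕ)] (f i) := iter_deriv_dvd α _ _ _ (hdvd i)
  rw [Finset.prod_pow_eq_pow_sum] at this
  exact dvd_smul_of_dvd _ this
end

section
/- Let p ≥ 4 be a natural number. Then there do not exist three pairwise non-proportional polynomials f₁, f₂, f₃ ∈ ℂ[X], each of the form fᵢ = cᵢ(X−aᵢ)^p(X−bᵢ)² with cᵢ ≠ 0 and aᵢ ≠ bᵢ, such that f₁ + f₂ + f₃ = 0. -/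
open Polynomial


set_option maxHeartbeats 1000000 in
lemma pair_fact (p : ℕ) (hp : 1 ≤ p) (c1 c2 u1 v1 u2 v2 : ℂ) :
    (C c1 * (X - C u1) ^ p * (X - C v1) ^ 2) * derivative (C c2 * (X - C u2) ^ p * (X - C v2) ^ 2)
      - derivative (C c1 * (X - C u1) ^ p * (X - C v1) ^ 2) * (C c2 * (X - C u2) ^ p * (X - C v2) ^ 2)
    = C (c1 * c2) * (X - C u1) ^ (p - 1) * (X - C u2) ^ (p - 1) * (X - C v1) * (X - C v2) *
      ((X - C u1) * (X - C v1) * (C (p : ℂ) * (X - C v2) + C 2 * (X - C u2))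
        - (X - C u2) * (X - C v2) * (C (p : ℂ) * (X - C v1) + C 2 * (X - C u1))) := by
  obtain ⟨q, rfl⟩ := Nat.exists_eq_add_of_le hp
  simp only [derivative_mul, derivative_pow, derivative_X_sub_C, derivative_C,
    Nat.add_sub_cancel_left, Nat.cast_add, Nat.cast_one, C_add, C_1, C_mul, Nat.cast_ofNat,
    mul_one, zero_mul, zero_add, map_ofNat]
  ring

lemma pair_dvd (p : ℕ) (hp : 1 ≤ p) (c1 c2 u1 v1 u2 v2 r : ℂ) :
    (X - C r) ^ ((p - 1) * ((if u1 = r then 1 else 0) + (if u2 = r then 1 else 0))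
        + ((if v1 = r then 1 else 0) + (if v2 = r then 1 else 0))
        + (if ((u1 = r ∨ v1 = r) ∧ (u2 = r ∨ v2 = r)) then 1 else 0)) ∣
      (C c1 * (X - C u1) ^ p * (X - C v1) ^ 2) * derivative (C c2 * (X - C u2) ^ p * (X - C v2) ^ 2)
        - derivative (C c1 * (X - C u1) ^ p * (X - C v1) ^ 2) * (C c2 * (X - C u2) ^ p * (X - C v2) ^ 2) := by
  rw [pair_fact p hp]
  have t1 : (X - C r) ^ ((p - 1) * (if u1 = r then 1 else 0)) ∣ (X - C u1) ^ (p - 1) := by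
    split_ifs with h
    · rw [h, mul_one]
    · simp
  have t2 : (X - C r) ^ ((p - 1) * (if u2 = r then 1 else 0)) ∣ (X - C u2) ^ (p - 1) := by
    split_ifs with h
    · rw [h, mul_one]
    · simp
  have t3 : (X - C r) ^ (if v1 = r then 1 else 0) ∣ (X - C v1) := by
    split_ifs with h
    · rw [h, pow_one]
    · simp
  have t4 : (X - C r) ^ (if v2 = r then 1 else 0) ∣ (X - C v2) := by
    split_ifs with h
    · rw [h, pow_one]
    · simp
  have t5 : (X - C r) ^ (if ((u1 = r ∨ v1 = r) ∧ (u2 = r ∨ v2 = r)) then 1 else 0) ∣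
      ((X - C u1) * (X - C v1) * (C (p : ℂ) * (X - C v2) + C 2 * (X - C u2))
        - (X - C u2) * (X - C v2) * (C (p : ℂ) * (X - C v1) + C 2 * (X - C u1))) := by
    split_ifs with h
    · rw [pow_one, dvd_iff_isRoot]
      obtain ⟨h1 | h1, h2 | h2⟩ := h <;>
        simp only [IsRoot, eval_sub, eval_mul, eval_add, eval_pow, eval_X, eval_C, h1, h2] <;>
        ring
    · simp
  have big := mul_dvd_mul (mul_dvd_mul (mul_dvd_mul (mul_dvd_mul
    (t1.mul_left (C (c1 * c2))) t2) t3) t4) t5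
  refine dvd_trans (dvd_of_eq ?_) big
  rw [← pow_add, ← pow_add, ← pow_add, ← pow_add]
  congr 1
  ring

set_option maxHeartbeats 3000000 in
theorem stmt_12 (p : ℕ) (hp : 4 ≤ p) :
    ¬ ∃ (f : Fin 3 → Polynomial ℂ) (c a b : Fin 3 → ℂ),
        (∀ i, c i ≠ 0) ∧ (∀ i, a i ≠ b i) ∧
        (∀ i, f i = C (c i) * (X - C (a i)) ^ p * (X - C (b i)) ^ 2) ∧
        (Pairwise fun i j => NonProp (f i) (f j)) ∧
        f 0 + f 1 + f 2 = 0 := by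
  rintro ⟨f, c, a, b, hc, hab, hf, hNP, hsum⟩
  classical
  have hp1 : 1 ≤ p := by omega
  have hprop : ∀ i j : Fin 3, i ≠ j → a i = a j → b i = b j → False := by
    intro i j hij hk hl
    refine (hNP hij (c i * (c j)⁻¹)).1 ?_
    rw [hf i, hf j, hk, hl, ← mul_assoc, ← mul_assoc, ← C_mul,
      inv_mul_cancel_right₀ (hc j)]
  by_cases hA : a 0 = a 1 ∧ a 1 = a 2
  · obtain ⟨hA1, hA2⟩ := hA
    by_cases hb01 : b 0 = b 1
    · exact hprop 0 1 (by decide) hA1 hb01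
    by_cases hb12 : b 1 = b 2
    · exact hprop 1 2 (by decide) hA2 hb12
    by_cases hb02 : b 0 = b 2
    · exact hprop 0 2 (by decide) (hA1.trans hA2) hb02
    have hev : ∀ t : ℂ, t ≠ 0 →
        c 0 * (a 0 + t - b 0) ^ 2 + c 1 * (a 0 + t - b 1) ^ 2 + c 2 * (a 0 + t - b 2) ^ 2 = 0 := by
      intro t ht
      have hs' : C (c 0) * (X - C (a 0)) ^ p * (X - C (b 0)) ^ 2
          + C (c 1) * (X - C (a 1)) ^ p * (X - C (b 1)) ^ 2
          + C (c 2) * (X - C (a 2)) ^ p * (X - C (b 2)) ^ 2 = 0 := by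
        rw [← hf 0, ← hf 1, ← hf 2]; exact hsum
      have h := congrArg (eval (a 0 + t)) hs'
      simp only [eval_add, eval_mul, eval_pow, eval_sub, eval_X, eval_C, eval_zero] at h
      rw [← hA1, ← (hA1.trans hA2)] at h
      have hb' : a 0 + t - a 0 = t := by ring
      rw [hb'] at h
      have h2 : t ^ p * (c 0 * (a 0 + t - b 0) ^ 2 + c 1 * (a 0 + t - b 1) ^ 2
          + c 2 * (a 0 + t - b 2) ^ 2) = 0 := by linear_combination h
      exact (mul_eq_zero.mp h2).resolve_left (pow_ne_zero p ht)
    have E1 := hev 1 one_ne_zero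
    have E2 := hev 2 two_ne_zero
    have E3 := hev 3 three_ne_zero
    have hz : c 0 * ((b 0 - b 1) * (b 0 - b 2)) = 0 := by
      linear_combination
        (3 - (5/4) * ((b 1 - a 0) + (b 2 - a 0)) + (1/2) * ((b 1 - a 0) * (b 2 - a 0))) * E1
        + (-3 + 2 * ((b 1 - a 0) + (b 2 - a 0)) - (b 1 - a 0) * (b 2 - a 0)) * E2
        + (1 - (3/4) * ((b 1 - a 0) + (b 2 - a 0)) + (1/2) * ((b 1 - a 0) * (b 2 - a 0))) * E3
    rcases mul_eq_zero.mp hz with h | h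
    · exact hc 0 h
    rcases mul_eq_zero.mp h with h' | h'
    · exact hb01 (sub_eq_zero.mp h')
    · exact hb02 (sub_eq_zero.mp h')
  · -- main case : not all the a i are equal
    set W := f 0 * derivative (f 1) - derivative (f 0) * f 1 with hWdef
    have hf2' : f 2 = - f 0 - f 1 := by linear_combination hsum
    have hfac := pair_fact p hp1 (c 0) (c 1) (a 0) (b 0) (a 1) (b 1)
    rw [← hf 0, ← hf 1, ← hWdef] at hfac
    have hp0 : (p : ℂ) ≠ 0 := Nat.cast_ne_zero.mpr (by omega)
    have hW : W ≠ 0 := by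
      intro h0
      rw [h0] at hfac
      have hV : ((X - C (a 0)) * (X - C (b 0)) * (C (p:ℂ) * (X - C (b 1)) + C 2 * (X - C (a 1)))
          - (X - C (a 1)) * (X - C (b 1)) * (C (p:ℂ) * (X - C (b 0)) + C 2 * (X - C (a 0)))) = 0 := by
        have hne : C (c 0 * c 1) * (X - C (a 0)) ^ (p-1) * (X - C (a 1)) ^ (p-1)
            * (X - C (b 0)) * (X - C (b 1)) ≠ 0 := by
          refine mul_ne_zero (mul_ne_zero (mul_ne_zero (mul_ne_zero ?_ ?_) ?_) ?_) ?_
          · exact C_ne_zero.mpr (mul_ne_zero (hc 0) (hc 1))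
          · exact pow_ne_zero _ (X_sub_C_ne_zero _)
          · exact pow_ne_zero _ (X_sub_C_ne_zero _)
          · exact X_sub_C_ne_zero _
          · exact X_sub_C_ne_zero _
        rcases mul_eq_zero.mp hfac.symm with h | h
        · exact absurd h hne
        · exact h
      have hevV : ∀ x : ℂ, (x - a 0) * (x - b 0) * ((p:ℂ) * (x - b 1) + 2 * (x - a 1))
          - (x - a 1) * (x - b 1) * ((p:ℂ) * (x - b 0) + 2 * (x - a 0)) = 0 := by
        intro x
        have h := congrArg (eval x) hV
        simpa only [eval_sub, eval_mul, eval_add, eval_X, eval_C, eval_zero] using h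
      have h6 : (a 0 - a 1) * ((a 0 - b 1) * ((p:ℂ) * (a 0 - b 0))) = 0 := by
        linear_combination (-1 : ℂ) * hevV (a 0)
      rcases mul_eq_zero.mp h6 with h | h
      · have ha01 : a 0 = a 1 := sub_eq_zero.mp h
        have h7 : (b 0 - a 1) * ((b 0 - b 1) * (2 * (b 0 - a 0))) = 0 := by
          linear_combination (-1 : ℂ) * hevV (b 0)
        have hb : b 0 = b 1 := by
          rcases mul_eq_zero.mp h7 with h8 | h8
          · exact absurd ((sub_eq_zero.mp h8).trans ha01.symm) (Ne.symm (hab 0))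
          rcases mul_eq_zero.mp h8 with h9 | h9
          · exact sub_eq_zero.mp h9
          · exact absurd h9 (mul_ne_zero two_ne_zero (sub_ne_zero.mpr (Ne.symm (hab 0))))
        exact hprop 0 1 (by decide) ha01 hb
      rcases mul_eq_zero.mp h with h | h
      · have hab1' : a 0 = b 1 := sub_eq_zero.mp h
        have h8 : (a 1 - a 0) * ((a 1 - b 0) * ((p:ℂ) * (a 1 - b 1))) = 0 := by
          linear_combination hevV (a 1)
        rcases mul_eq_zero.mp h8 with h9 | h9
        · exact (hab 1) ((sub_eq_zero.mp h9).trans hab1')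
        rcases mul_eq_zero.mp h9 with h10 | h10
        · have ha1b0 : a 1 = b 0 := sub_eq_zero.mp h10
          apply absurd hV
          rw [← hab1', ← ha1b0]
          have hkey : (X - C (a 0)) * (X - C (a 1)) * (C (p:ℂ) * (X - C (a 0)) + C 2 * (X - C (a 1)))
              - (X - C (a 1)) * (X - C (a 0)) * (C (p:ℂ) * (X - C (a 1)) + C 2 * (X - C (a 0)))
              = C ((p:ℂ) - 2) * ((C (a 1) - C (a 0)) * ((X - C (a 0)) * (X - C (a 1)))) := by
            rw [C_sub]; ring
          rw [hkey]
          refine mul_ne_zero ?_ (mul_ne_zero ?_ (mul_ne_zero ?_ ?_))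
          · rw [Ne, C_eq_zero]
            intro hq
            have h2' : (p : ℂ) = 2 := by linear_combination hq
            have : p = 2 := by exact_mod_cast h2'
            omega
          · rw [← C_sub, Ne, C_eq_zero]
            exact sub_ne_zero.mpr (fun hh => hab 1 (hh.trans hab1'))
          · exact X_sub_C_ne_zero _
          · exact X_sub_C_ne_zero _
        · exact absurd h10 (mul_ne_zero hp0 (sub_ne_zero.mpr (hab 1)))
      · exact absurd h (mul_ne_zero hp0 (sub_ne_zero.mpr (hab 0)))
    -- per-root multiplicity bound
    have hcount : ∀ r : ℂ,
        (p-1) * ((if a 0 = r then 1 else 0) + (if a 1 = r then 1 else 0) + (if a 2 = r then 1 else 0))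
          + ((if b 0 = r then 1 else 0) + (if b 1 = r then 1 else 0) + (if b 2 = r then 1 else 0))
        ≤ W.roots.count r := by
      intro r
      have D01 := pair_dvd p hp1 (c 0) (c 1) (a 0) (b 0) (a 1) (b 1) r
      rw [← hf 0, ← hf 1, ← hWdef] at D01
      have D12 := pair_dvd p hp1 (c 1) (c 2) (a 1) (b 1) (a 2) (b 2) r
      rw [← hf 1, ← hf 2] at D12
      have hW12 : f 1 * derivative (f 2) - derivative (f 1) * f 2 = W := by
        rw [hWdef, hf2']
        simp only [derivative_sub, derivative_neg]
        ring
      rw [hW12] at D12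
      have D02 := pair_dvd p hp1 (c 0) (c 2) (a 0) (b 0) (a 2) (b 2) r
      rw [← hf 0, ← hf 2] at D02
      have hW02 : f 0 * derivative (f 2) - derivative (f 0) * f 2 = - W := by
        rw [hWdef, hf2']
        simp only [derivative_sub, derivative_neg]
        ring
      rw [hW02, dvd_neg] at D02
      rw [count_roots, le_rootMultiplicity_iff hW]
      have hle :
          (p-1) * ((if a 0 = r then 1 else 0) + (if a 1 = r then 1 else 0) + (if a 2 = r then 1 else 0))
            + ((if b 0 = r then 1 else 0) + (if b 1 = r then 1 else 0) + (if b 2 = r then 1 else 0))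
          ≤ (p - 1) * ((if a 0 = r then 1 else 0) + (if a 1 = r then 1 else 0))
            + ((if b 0 = r then 1 else 0) + (if b 1 = r then 1 else 0))
            + (if ((a 0 = r ∨ b 0 = r) ∧ (a 1 = r ∨ b 1 = r)) then 1 else 0) ∨
          (p-1) * ((if a 0 = r then 1 else 0) + (if a 1 = r then 1 else 0) + (if a 2 = r then 1 else 0))
            + ((if b 0 = r then 1 else 0) + (if b 1 = r then 1 else 0) + (if b 2 = r then 1 else 0))
          ≤ (p - 1) * ((if a 1 = r then 1 else 0) + (if a 2 = r then 1 else 0))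
            + ((if b 1 = r then 1 else 0) + (if b 2 = r then 1 else 0))
            + (if ((a 1 = r ∨ b 1 = r) ∧ (a 2 = r ∨ b 2 = r)) then 1 else 0) ∨
          (p-1) * ((if a 0 = r then 1 else 0) + (if a 1 = r then 1 else 0) + (if a 2 = r then 1 else 0))
            + ((if b 0 = r then 1 else 0) + (if b 1 = r then 1 else 0) + (if b 2 = r then 1 else 0))
          ≤ (p - 1) * ((if a 0 = r then 1 else 0) + (if a 2 = r then 1 else 0))
            + ((if b 0 = r then 1 else 0) + (if b 2 = r then 1 else 0))
            + (if ((a 0 = r ∨ b 0 = r) ∧ (a 2 = r ∨ b 2 = r)) then 1 else 0) := by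
        have k0 : ¬(a 0 = r ∧ b 0 = r) := fun h => hab 0 (h.1.trans h.2.symm)
        have k1 : ¬(a 1 = r ∧ b 1 = r) := fun h => hab 1 (h.1.trans h.2.symm)
        have k2 : ¬(a 2 = r ∧ b 2 = r) := fun h => hab 2 (h.1.trans h.2.symm)
        have k3 : ¬(a 0 = r ∧ a 1 = r ∧ a 2 = r) := fun h =>
          hA ⟨h.1.trans h.2.1.symm, h.2.1.trans h.2.2.symm⟩
        by_cases h1 : a 0 = r <;> by_cases h2 : a 1 = r <;> by_cases h3 : a 2 = r <;>
          by_cases h4 : b 0 = r <;> by_cases h5 : b 1 = r <;> by_cases h6 : b 2 = r <;>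
        first
          | (simp only [h1, h2, h3, h4, h5, h6, if_true, if_false, eq_self_iff_true,
               not_true, not_false_iff, true_and, and_true, false_and, and_false,
               true_or, or_true, false_or, or_false]; omega)
          | exact (k0 ⟨h1, h4⟩).elim
          | exact (k1 ⟨h2, h5⟩).elim
          | exact (k2 ⟨h3, h6⟩).elim
          | exact (k3 ⟨h1, h2, h3⟩).elim
      rcases hle with h | h | h
      · exact dvd_trans (pow_dvd_pow _ h) D01
      · exact dvd_trans (pow_dvd_pow _ h) D12
      · exact dvd_trans (pow_dvd_pow _ h) D02
    -- summing over all roots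
    set s : Finset ℂ := (Finset.univ.image a) ∪ (Finset.univ.image b) with hs
    have mem_a : ∀ i, a i ∈ s := fun i =>
      Finset.mem_union_left _ (Finset.mem_image_of_mem a (Finset.mem_univ i))
    have mem_b : ∀ i, b i ∈ s := fun i =>
      Finset.mem_union_right _ (Finset.mem_image_of_mem b (Finset.mem_univ i))
    have one_a : ∀ i, (∑ r ∈ s, if a i = r then 1 else 0) = 1 := by
      intro i; rw [Finset.sum_ite_eq]; exact if_pos (mem_a i)
    have one_b : ∀ i, (∑ r ∈ s, if b i = r then 1 else 0) = 1 := by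
      intro i; rw [Finset.sum_ite_eq]; exact if_pos (mem_b i)
    have hsum1 : ∑ r ∈ s, ((p-1) * ((if a 0 = r then 1 else 0) + (if a 1 = r then 1 else 0)
          + (if a 2 = r then 1 else 0))
          + ((if b 0 = r then 1 else 0) + (if b 1 = r then 1 else 0) + (if b 2 = r then 1 else 0)))
        = (p-1)*3+3 := by
      simp only [Finset.sum_add_distrib, ← Finset.mul_sum, one_a, one_b]
    have hsum2 : ∑ r ∈ s, ((p-1) * ((if a 0 = r then 1 else 0) + (if a 1 = r then 1 else 0)
          + (if a 2 = r then 1 else 0))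
          + ((if b 0 = r then 1 else 0) + (if b 1 = r then 1 else 0) + (if b 2 = r then 1 else 0)))
        ≤ ∑ r ∈ s, W.roots.count r :=
      Finset.sum_le_sum (fun r _ => hcount r)
    have hsum3 : ∑ r ∈ s, W.roots.count r ≤ Multiset.card W.roots := by
      rw [← Multiset.toFinset_sum_count_eq W.roots]
      apply Finset.sum_le_sum_of_ne_zero
      intro x _ hnz
      rw [Multiset.mem_toFinset]
      exact Multiset.count_ne_zero.mp hnz
    have hdeg : ∀ i : Fin 3, (f i).natDegree ≤ p + 2 := by
      intro i
      rw [hf i]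
      have h1 := natDegree_mul_le (p := C (c i) * (X - C (a i)) ^ p) (q := (X - C (b i)) ^ 2)
      have h2 := natDegree_mul_le (p := C (c i)) (q := (X - C (a i)) ^ p)
      simp only [natDegree_pow, natDegree_X_sub_C, natDegree_C, mul_one] at h1 h2
      omega
    have hWdeg : W.natDegree ≤ 2*p+3 := by
      have h1 := natDegree_sub_le (f 0 * derivative (f 1)) (derivative (f 0) * f 1)
      have h2 := natDegree_mul_le (p := f 0) (q := derivative (f 1))
      have h3 := natDegree_mul_le (p := derivative (f 0)) (q := f 1)
      have h4 := natDegree_derivative_le (f 1)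
      have h5 := natDegree_derivative_le (f 0)
      have e0 := hdeg 0
      have e1 := hdeg 1
      rw [← hWdef] at h1
      have h6 : (f 0 * derivative (f 1)).natDegree ≤ 2*p+3 := by omega
      have h7 : (derivative (f 0) * f 1).natDegree ≤ 2*p+3 := by omega
      exact le_trans h1 (max_le h6 h7)
    have hcard := W.card_roots'
    omega
end

section
/- There exist distinct complex numbers a, b ∈ ℂ \ {0, −1} and nonzero complex numbers λ, ν such that (X+1)⁴ − X⁴ = λ(X+a)³ + ν(X+b)³ in ℂ[X]. Consequently, there are four pairwise non-proportional binary forms of degree 7, each with root multiplicity type (4,3), whose sum is zero. -/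
open Polynomial

/-- two binary forms are non-proportional -/
def MvNonProp (f g : MvPolynomial (Fin 2) ℂ) : Prop :=
  ∀ e : ℂ, f ≠ MvPolynomial.C e * g ∧ g ≠ MvPolynomial.C e * f

/-- a binary form of root multiplicity type `(4,3)`: a nonzero constant times
`L₁⁴ L₂³` with `L₁, L₂` non-proportional linear forms. -/
def IsType43 (f : MvPolynomial (Fin 2) ℂ) : Prop :=
  ∃ c a₁ b₁ a₂ b₂ : ℂ, c ≠ 0 ∧ a₁ * b₂ - a₂ * b₁ ≠ 0 ∧
    f = MvPolynomial.C c * (MvPolynomial.C a₁ * MvPolynomial.X 0 + MvPolynomial.C b₁ * MvPolynomial.X 1) ^ 4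
      * (MvPolynomial.C a₂ * MvPolynomial.X 0 + MvPolynomial.C b₂ * MvPolynomial.X 1) ^ 3

private lemma np_of_cross (f g : MvPolynomial (Fin 2) ℂ) (p q : Fin 2 → ℂ)
    (h : MvPolynomial.eval p f * MvPolynomial.eval q g ≠
      MvPolynomial.eval q f * MvPolynomial.eval p g) :
    MvNonProp f g := by
  intro e
  constructor
  · intro hf
    apply h
    rw [hf]
    simp only [map_mul, MvPolynomial.eval_C]
    ring
  · intro hg
    apply h
    rw [hg]
    simp only [map_mul, MvPolynomial.eval_C]
    ring

theorem stmt_13 :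
    (∃ a b lam nu : ℂ, a ≠ b ∧ a ≠ 0 ∧ a ≠ -1 ∧ b ≠ 0 ∧ b ≠ -1 ∧ lam ≠ 0 ∧ nu ≠ 0 ∧
      (X + 1 : Polynomial ℂ) ^ 4 - X ^ 4 = C lam * (X + C a) ^ 3 + C nu * (X + C b) ^ 3) ∧
    ∃ F : Fin 4 → MvPolynomial (Fin 2) ℂ,
      (∀ i, IsType43 (F i)) ∧
      (Pairwise fun i j => MvNonProp (F i) (F j)) ∧
      ∑ i, F i = 0 := by
  set s : ℂ := ((Real.sqrt 3 : ℝ) : ℂ) with hsdef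
  have hs : s ^ 2 = 3 := by
    rw [hsdef]; norm_cast; rw [Real.sq_sqrt]; norm_num
  set a : ℂ := (3 - s) / 6 with hadef
  set b : ℂ := (3 + s) / 6 with hbdef
  -- basic scalar facts
  have hs0 : s ≠ 0 := by
    intro h; rw [h] at hs; norm_num at hs
  have hsum : a + b = 1 := by rw [hadef, hbdef]; ring
  have hprod : 6 * (a * b) = 1 := by
    rw [hadef, hbdef]; field_simp; linear_combination -hs
  have hab : a ≠ b := by
    rw [hadef, hbdef]; intro h
    apply hs0; linear_combination -3 * h
  have ha0 : a ≠ 0 := by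
    rw [hadef]; intro h
    have h3 : s = 3 := by linear_combination -6 * h
    rw [h3] at hs; norm_num at hs
  have ha1 : a ≠ -1 := by
    rw [hadef]; intro h
    have h9 : s = 9 := by linear_combination -6 * h
    rw [h9] at hs; norm_num at hs
  have hb0 : b ≠ 0 := by
    rw [hbdef]; intro h
    have h3 : s = -3 := by linear_combination 6 * h
    rw [h3] at hs; norm_num at hs
  have hb1 : b ≠ -1 := by
    rw [hbdef]; intro h
    have h9 : s = -9 := by linear_combination 6 * h
    rw [h9] at hs; norm_num at hs
  have ha1' : a ≠ 1 := by
    rw [hadef]; intro h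
    have h3 : s = -3 := by linear_combination -6 * h
    rw [h3] at hs; norm_num at hs
  have hb1' : b ≠ 1 := by
    rw [hbdef]; intro h
    have h3 : s = 3 := by linear_combination 6 * h
    rw [h3] at hs; norm_num at hs
  constructor
  · refine ⟨a, b, 2, 2, hab, ha0, ha1, hb0, hb1, two_ne_zero, two_ne_zero, ?_⟩
    have hA : (C a + C b : ℂ[X]) = 1 := by
      rw [← map_add, hsum, map_one]
    have hB : (6 : ℂ[X]) * (C a * C b) = 1 := by
      have := congrArg (Polynomial.C : ℂ →+* ℂ[X]) hprod
      rw [map_mul, map_mul, map_one, map_ofNat] at this; exact this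
    have h2 : (C (2:ℂ) : ℂ[X]) = 2 := map_ofNat _ 2
    rw [h2]
    linear_combination
      (-6*X^2 - 6*(C a + C b + 1)*X + (6*(C a*C b) - 2*((C a+C b)^2+(C a+C b)+1))) * hA
      + (2*X+1) * hB
  · -- the four binary forms
    set X0 : MvPolynomial (Fin 2) ℂ := MvPolynomial.X 0 with hX0
    set X1 : MvPolynomial (Fin 2) ℂ := MvPolynomial.X 1 with hX1
    set F0 : MvPolynomial (Fin 2) ℂ :=
      MvPolynomial.C 1 * (MvPolynomial.C 1 * X0 + MvPolynomial.C 1 * X1)^4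
        * (MvPolynomial.C 0 * X0 + MvPolynomial.C 1 * X1)^3 with hF0
    set F1 : MvPolynomial (Fin 2) ℂ :=
      MvPolynomial.C (-1) * (MvPolynomial.C 1 * X0 + MvPolynomial.C 0 * X1)^4
        * (MvPolynomial.C 0 * X0 + MvPolynomial.C 1 * X1)^3 with hF1
    set F2 : MvPolynomial (Fin 2) ℂ :=
      MvPolynomial.C (-2) * (MvPolynomial.C 0 * X0 + MvPolynomial.C 1 * X1)^4
        * (MvPolynomial.C 1 * X0 + MvPolynomial.C a * X1)^3 with hF2
    set F3 : MvPolynomial (Fin 2) ℂ :=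
      MvPolynomial.C (-2) * (MvPolynomial.C 0 * X0 + MvPolynomial.C 1 * X1)^4
        * (MvPolynomial.C 1 * X0 + MvPolynomial.C b * X1)^3 with hF3
    refine ⟨![F0, F1, F2, F3], ?_, ?_, ?_⟩
    · intro i
      fin_cases i
      · exact ⟨1, 1, 1, 0, 1, one_ne_zero, by norm_num, hF0⟩
      · exact ⟨-1, 1, 0, 0, 1, by norm_num, by norm_num, hF1⟩
      · exact ⟨-2, 0, 1, 1, a, by norm_num, by simp, hF2⟩
      · exact ⟨-2, 0, 1, 1, b, by norm_num, by simp, hF3⟩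
    · have symm : ∀ f g : MvPolynomial (Fin 2) ℂ, MvNonProp f g → MvNonProp g f :=
        fun f g h e => ⟨(h e).2, (h e).1⟩
      have h1a : (1:ℂ) - a ≠ 0 := sub_ne_zero.mpr (Ne.symm ha1')
      have h1b : (1:ℂ) - b ≠ 0 := sub_ne_zero.mpr (Ne.symm hb1')
      have habne : a - b ≠ 0 := sub_ne_zero.mpr hab
      have np01 : MvNonProp F0 F1 := by
        apply np_of_cross _ _ ![0,1] ![-1,1]
        rw [hF0, hF1]
        simp only [hX0, hX1, map_mul, map_add, map_pow, MvPolynomial.eval_C,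
          MvPolynomial.eval_X, Matrix.cons_val_zero, Matrix.cons_val_one, Matrix.head_cons]
        norm_num
      have np02 : MvNonProp F0 F2 := by
        apply np_of_cross _ _ ![-1,1] ![-a,1]
        rw [hF0, hF2]
        simp only [hX0, hX1, map_mul, map_add, map_pow, MvPolynomial.eval_C,
          MvPolynomial.eval_X, Matrix.cons_val_zero, Matrix.cons_val_one, Matrix.head_cons]
        intro h
        exact pow_ne_zero 7 h1a (by linear_combination (-1/2 : ℂ) * h)
      have np03 : MvNonProp F0 F3 := by
        apply np_of_cross _ _ ![-1,1] ![-b,1]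
        rw [hF0, hF3]
        simp only [hX0, hX1, map_mul, map_add, map_pow, MvPolynomial.eval_C,
          MvPolynomial.eval_X, Matrix.cons_val_zero, Matrix.cons_val_one, Matrix.head_cons]
        intro h
        exact pow_ne_zero 7 h1b (by linear_combination (-1/2 : ℂ) * h)
      have np12 : MvNonProp F1 F2 := by
        apply np_of_cross _ _ ![0,1] ![-a,1]
        rw [hF1, hF2]
        simp only [hX0, hX1, map_mul, map_add, map_pow, MvPolynomial.eval_C,
          MvPolynomial.eval_X, Matrix.cons_val_zero, Matrix.cons_val_one, Matrix.head_cons]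
        intro h
        exact pow_ne_zero 7 ha0 (by linear_combination (-1/2 : ℂ) * h)
      have np13 : MvNonProp F1 F3 := by
        apply np_of_cross _ _ ![0,1] ![-b,1]
        rw [hF1, hF3]
        simp only [hX0, hX1, map_mul, map_add, map_pow, MvPolynomial.eval_C,
          MvPolynomial.eval_X, Matrix.cons_val_zero, Matrix.cons_val_one, Matrix.head_cons]
        intro h
        exact pow_ne_zero 7 hb0 (by linear_combination (-1/2 : ℂ) * h)
      have np23 : MvNonProp F2 F3 := by
        apply np_of_cross _ _ ![-a,1] ![-b,1]
        rw [hF2, hF3]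
        simp only [hX0, hX1, map_mul, map_add, map_pow, MvPolynomial.eval_C,
          MvPolynomial.eval_X, Matrix.cons_val_zero, Matrix.cons_val_one, Matrix.head_cons]
        intro h
        exact pow_ne_zero 6 habne (by linear_combination (1/4 : ℂ) * h)
      clear_value F0 F1 F2 F3
      intro i j hij
      fin_cases i <;> fin_cases j <;>
        simp only [Matrix.cons_val_zero, Matrix.cons_val_one, Matrix.head_cons,
          Matrix.cons_val_two, Matrix.tail_cons, Matrix.cons_val_three,
          Fin.mk_zero, Fin.mk_one, ne_eq, not_true_eq_false, Fin.isValue] at hij ⊢ <;>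
        first
        | exact np01 | exact np02 | exact np03 | exact np12 | exact np13 | exact np23
        | exact symm _ _ np01 | exact symm _ _ np02 | exact symm _ _ np03
        | exact symm _ _ np12 | exact symm _ _ np13 | exact symm _ _ np23
    · rw [Fin.sum_univ_four]
      simp only [Matrix.cons_val_zero, Matrix.cons_val_one, Matrix.head_cons,
        Matrix.cons_val_two, Matrix.tail_cons, Matrix.cons_val_three]
      rw [hF0, hF1, hF2, hF3]
      have hA : (MvPolynomial.C a + MvPolynomial.C b : MvPolynomial (Fin 2) ℂ) = 1 := by
        rw [← map_add, hsum, map_one]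
      have hB : (6 : MvPolynomial (Fin 2) ℂ) * (MvPolynomial.C a * MvPolynomial.C b) = 1 := by
        have := congrArg (MvPolynomial.C : ℂ →+* MvPolynomial (Fin 2) ℂ) hprod
        rw [map_mul, map_mul, map_one, map_ofNat] at this; exact this
      have hm1 : (MvPolynomial.C (-1 : ℂ) : MvPolynomial (Fin 2) ℂ) = -1 := by
        simp
      have hm2 : (MvPolynomial.C (-2 : ℂ) : MvPolynomial (Fin 2) ℂ) = -2 := by
        rw [map_neg, map_ofNat]
      have h1 : (MvPolynomial.C (1 : ℂ) : MvPolynomial (Fin 2) ℂ) = 1 := map_one _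
      have h0 : (MvPolynomial.C (0 : ℂ) : MvPolynomial (Fin 2) ℂ) = 0 := map_zero _
      rw [hm1, hm2, h1, h0]
      set A := (MvPolynomial.C a : MvPolynomial (Fin 2) ℂ)
      set B := (MvPolynomial.C b : MvPolynomial (Fin 2) ℂ)
      linear_combination
        (X1^3 * (-6*X0^2*X1^2 - 6*(A+B+1)*X0*X1^3 + (6*(A*B) - 2*((A+B)^2+(A+B)+1))*X1^4)) * hA
        + (X1^3 * (2*X0*X1^3 + X1^4)) * hB
end

section
/- Let ν be a subpartition of a partition μ, i.e., ν = (μ_{i₁} ≥ ⋯ ≥ μ_{i_s}) for some indices 1 ≤ i₁ < ⋯ < i_s ≤ r of μ = (μ₁ ≥ ⋯ ≥ μ_r). Suppose there exist m pairwise non-proportional polynomials g₁, …, g_m ∈ ℂ[X] of root multiplicity type ν with g₁ + ⋯ + g_m = 0. Then there exist m pairwise non-proportional polynomials f₁, …, f_m ∈ ℂ[X] of root multiplicity type μ with f₁ + ⋯ + f_m = 0. -/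
open Polynomial

/-- `f` has root multiplicity type `μ`: it is a nonzero constant times
`∏ (X - aⱼ)^(μ j)` with pairwise distinct `aⱼ`. -/
def HasRootType {k : ℕ} (μ : Fin k → ℕ) (f : Polynomial ℂ) : Prop :=
  ∃ (c : ℂ) (a : Fin k → ℂ), c ≠ 0 ∧ Function.Injective a ∧
    f = C c * ∏ j, (X - C (a j)) ^ (μ j)

theorem stmt_17 (r s m : ℕ) (μ : Fin r → ℕ)
    (hmono : ∀ j k : Fin r, j ≤ k → μ k ≤ μ j) (hpos : ∀ j, 0 < μ j)
    (ι : Fin s → Fin r) (hι : StrictMono ι)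
    (g : Fin m → Polynomial ℂ)
    (hg : ∀ i, HasRootType (fun j : Fin s => μ (ι j)) (g i))
    (hgnp : Pairwise fun i j => NonProp (g i) (g j))
    (hgsum : ∑ i, g i = 0) :
    ∃ f : Fin m → Polynomial ℂ,
      (∀ i, HasRootType μ (f i)) ∧
      (Pairwise fun i j => NonProp (f i) (f j)) ∧
      ∑ i, f i = 0 := by
  classical
  choose c a hc ha hrep using hg
  -- each g i is nonzero
  have hgne : ∀ i, g i ≠ 0 := by
    intro i
    rw [hrep i]
    exact mul_ne_zero (by simpa using hc i)
      (Finset.prod_ne_zero_iff.2 fun j _ => pow_ne_zero _ (X_sub_C_ne_zero _))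
  -- bad set of all roots
  set B : Finset ℂ := Finset.univ.biUnion (fun i => (g i).roots.toFinset) with hB
  have hinf : ((↑B : Set ℂ)ᶜ).Infinite := B.finite_toSet.infinite_compl
  have := hinf.to_subtype
  obtain ⟨b0⟩ : Nonempty (Fin r ↪ ((↑B : Set ℂ)ᶜ : Set ℂ)) :=
    ⟨Fin.valEmbedding.trans (Infinite.natEmbedding _)⟩
  set b : Fin r → ℂ := fun j => (b0 j : ℂ) with hbdef
  have hbinj : Function.Injective b := fun j k h => b0.injective (Subtype.ext h)
  have hbnotroot : ∀ i j, (g i).eval (b j) ≠ 0 := by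
    intro i j h0
    apply (b0 j).2
    exact Finset.mem_biUnion.2 ⟨i, Finset.mem_univ i,
      Multiset.mem_toFinset.2 ((mem_roots (hgne i)).2 h0)⟩
  have haroot : ∀ i t, (g i).eval (a i t) = 0 := by
    intro i t
    rw [hrep i]
    simp only [eval_mul, eval_prod, eval_pow, eval_sub, eval_X, eval_C]
    apply mul_eq_zero_of_right
    exact Finset.prod_eq_zero (Finset.mem_univ t)
      (by rw [sub_self]; exact zero_pow (hpos _).ne')
  -- the fixed extra factor
  set h : Polynomial ℂ :=
    ∏ j ∈ Finset.univ.filter (fun j => ¬ ∃ t, ι t = j), (X - C (b j)) ^ (μ j) with hhdef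
  have hhne : h ≠ 0 :=
    Finset.prod_ne_zero_iff.2 fun j _ => pow_ne_zero _ (X_sub_C_ne_zero _)
  -- combined root function
  set a' : Fin m → Fin r → ℂ := fun i j =>
    if hx : ∃ t, ι t = j then a i hx.choose else b j with ha'def
  have ha'in : ∀ i t, a' i (ι t) = a i t := by
    intro i t
    have hx : ∃ t', ι t' = ι t := ⟨t, rfl⟩
    simp only [ha'def, dif_pos hx]
    exact congrArg (a i) (hι.injective hx.choose_spec)
  have ha'out : ∀ i j, (¬ ∃ t, ι t = j) → a' i j = b j := by
    intro i j hx
    simp [ha'def, dif_neg hx]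
  have ha'inj : ∀ i, Function.Injective (a' i) := by
    intro i j k heq
    by_cases hj : ∃ t, ι t = j <;> by_cases hk : ∃ t, ι t = k
    · obtain ⟨t, rfl⟩ := hj
      obtain ⟨u, rfl⟩ := hk
      rw [ha'in, ha'in] at heq
      exact congrArg ι (ha i heq)
    · obtain ⟨t, rfl⟩ := hj
      rw [ha'in, ha'out i k hk] at heq
      exact absurd (heq ▸ haroot i t) (hbnotroot i k)
    · obtain ⟨u, rfl⟩ := hk
      rw [ha'out i j hj, ha'in] at heq
      exact absurd (heq.symm ▸ haroot i u) (hbnotroot i j)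
    · rw [ha'out i j hj, ha'out i k hk] at heq
      exact hbinj heq
  -- product decomposition
  have himg : Finset.univ.filter (fun j => ∃ t, ι t = j) = Finset.image ι Finset.univ := by
    ext j; simp
  have key : ∀ i, ∏ j, (X - C (a' i j)) ^ (μ j)
      = (∏ t, (X - C (a i t)) ^ (μ (ι t))) * h := by
    intro i
    rw [← Finset.prod_filter_mul_prod_filter_not Finset.univ (fun j => ∃ t, ι t = j)]
    congr 1
    · rw [himg, Finset.prod_image (fun t _ u _ hh => hι.injective hh)]
      exact Finset.prod_congr rfl fun t _ => by rw [ha'in]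
    · exact Finset.prod_congr rfl fun j hj => by
        rw [ha'out i j (Finset.mem_filter.1 hj).2]
  refine ⟨fun i => g i * h, fun i => ?_, ?_, ?_⟩
  · refine ⟨c i, a' i, hc i, ha'inj i, ?_⟩
    show g i * h = _
    rw [key i, hrep i, mul_assoc]
  · intro i j hij
    intro e
    have := hgnp hij e
    constructor
    · intro heq
      apply this.1
      apply mul_right_cancel₀ hhne
      have heq' : g i * h = C e * (g j * h) := heq
      rw [heq']; ring
    · intro heq
      apply this.2
      apply mul_right_cancel₀ hhne
      have heq' : g j * h = C e * (g i * h) := heq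
      rw [heq']; ring
  · rw [← Finset.sum_mul, hgsum, zero_mul]
end
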